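/- Suppose (x_n)_{n≥-1}, (y_n)_{n≥-1} solve the system with x_n ≠ 0 and y_n ≠ 0 for all n. Then for every n ≥ 0, x_{2n} = x_0^{n+1}·(y_{-1}/(x_{-1}·y_0))^n·∏_{s=0}^{n-1} [(∏_{k=0}^{2s} c_k + x_{-1}·y_0·∑_{l=0}^{2s} d_l·∏_{k=l+1}^{2s} c_k) / (∏_{k=0}^{2s+1} a_k + x_0·y_{-1}·∑_{l=0}^{2s+1} b_l·∏_{k=l+1}^{2s+1} a_k)]. -/

import Mathlib

theorem stmt_6_aux (x0 ym1 xm1 y0 P Q W : ℝ) (n : ℕ) (hxm1 : xm1 ≠ 0)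
    (hy0 : y0 ≠ 0) (hP : P ≠ 0) (_hQ : Q ≠ 0) :
    x0 ^ (n + 1) * (ym1 / (xm1 * y0)) ^ n * W * (x0 * ym1 / P) / (xm1 * y0 / Q)
      = x0 ^ (n + 1 + 1) * (ym1 / (xm1 * y0)) ^ (n + 1) * (W * (Q / P)) := by
  rw [pow_succ (ym1 / (xm1 * y0))]
  field_simp
  ring


theorem stmt_6 (x y : ℤ → ℝ) (a b c d : ℕ → ℝ)
    (hx : ∀ n : ℤ, -1 ≤ n → x n ≠ 0) (hy : ∀ n : ℤ, -1 ≤ n → y n ≠ 0)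
    (hda : ∀ n : ℕ, a n + b n * (x n * y ((n : ℤ) - 1)) ≠ 0)
    (hdc : ∀ n : ℕ, c n + d n * (x ((n : ℤ) - 1) * y n) ≠ 0)
    (hxe : ∀ n : ℕ, x ((n : ℤ) + 1) =
      x n * y ((n : ℤ) - 1) / (y n * (a n + b n * (x n * y ((n : ℤ) - 1)))))
    (hye : ∀ n : ℕ, y ((n : ℤ) + 1) =
      x ((n : ℤ) - 1) * y n / (x n * (c n + d n * (x ((n : ℤ) - 1) * y n)))) :
    ∀ n : ℕ, x (2 * (n : ℤ)) =
      x 0 ^ (n + 1) * (y (-1) / (x (-1) * y 0)) ^ n *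
        ∏ s ∈ Finset.range n,
          ((∏ k ∈ Finset.range (2 * s + 1), c k) +
              x (-1) * y 0 * ∑ l ∈ Finset.range (2 * s + 1), d l * ∏ k ∈ Finset.Ico (l + 1) (2 * s + 1), c k) /
          ((∏ k ∈ Finset.range (2 * s + 2), a k) +
              x 0 * y (-1) * ∑ l ∈ Finset.range (2 * s + 2), b l * ∏ k ∈ Finset.Ico (l + 1) (2 * s + 2), a k) := by
  -- basic nonvanishing
  have hx0 : x 0 ≠ 0 := hx 0 (by norm_num)
  have hxm1 : x (-1) ≠ 0 := hx (-1) (by norm_num)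
  have hy0 : y 0 ≠ 0 := hy 0 (by norm_num)
  have hym1 : y (-1) ≠ 0 := hy (-1) (by norm_num)
  have hu0ne : x 0 * y (-1) ≠ 0 := mul_ne_zero hx0 hym1
  have hv0ne : x (-1) * y 0 ≠ 0 := mul_ne_zero hxm1 hy0
  have huN : ∀ n : ℕ, x (n : ℤ) * y ((n : ℤ) - 1) ≠ 0 :=
    fun n => mul_ne_zero (hx _ (by omega)) (hy _ (by omega))
  have hvN : ∀ n : ℕ, x ((n : ℤ) - 1) * y (n : ℤ) ≠ 0 :=
    fun n => mul_ne_zero (hx _ (by omega)) (hy _ (by omega))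
  -- recurrences for u n = x n * y (n-1) and v n = x (n-1) * y n
  have hurec : ∀ n : ℕ, x ((n : ℤ) + 1) * y (n : ℤ) *
      (a n + b n * (x (n : ℤ) * y ((n : ℤ) - 1))) = x (n : ℤ) * y ((n : ℤ) - 1) := by
    intro n
    have h1 : y (n : ℤ) ≠ 0 := hy _ (by omega)
    have h2 := hda n
    rw [hxe n]
    rw [div_mul_eq_mul_div, div_mul_eq_mul_div, div_eq_iff (mul_ne_zero h1 h2)]
    ring
  have hvrec : ∀ n : ℕ, x (n : ℤ) * y ((n : ℤ) + 1) *
      (c n + d n * (x ((n : ℤ) - 1) * y (n : ℤ))) = x ((n : ℤ) - 1) * y (n : ℤ) := by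
    intro n
    have h1 : x (n : ℤ) ≠ 0 := hx _ (by omega)
    have h2 := hdc n
    rw [hye n]
    rw [mul_div_assoc', div_mul_eq_mul_div, div_eq_iff (mul_ne_zero h1 h2)]
    ring
  -- closed forms
  have keyu : ∀ n : ℕ, x (n : ℤ) * y ((n : ℤ) - 1) *
      ((∏ k ∈ Finset.range n, a k) +
        x 0 * y (-1) * ∑ l ∈ Finset.range n, b l * ∏ k ∈ Finset.Ico (l + 1) n, a k)
      = x 0 * y (-1) := by
    intro n
    induction n with
    | zero => norm_num
    | succ n ih =>
      have hrec := hurec n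
      have hB : (∑ l ∈ Finset.range (n + 1), b l * ∏ k ∈ Finset.Ico (l + 1) (n + 1), a k)
          = (∑ l ∈ Finset.range n, b l * ∏ k ∈ Finset.Ico (l + 1) n, a k) * a n + b n := by
        rw [Finset.sum_range_succ, Finset.Ico_self, Finset.prod_empty, mul_one, Finset.sum_mul]
        congr 1
        refine Finset.sum_congr rfl fun l hl => ?_
        rw [Finset.prod_Ico_succ_top (Finset.mem_range.mp hl)]
        ring
      rw [show (((n : ℕ) + 1 : ℕ) : ℤ) - 1 = (n : ℤ) from by push_cast; ring,
        show (((n : ℕ) + 1 : ℕ) : ℤ) = (n : ℤ) + 1 from by push_cast; ring,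
        Finset.prod_range_succ, hB]
      refine mul_left_cancel₀ (huN n) ?_
      linear_combination (a n * (x ((n : ℤ) + 1) * y (n : ℤ))) * ih + (x 0 * y (-1)) * hrec
  have keyv : ∀ n : ℕ, x ((n : ℤ) - 1) * y (n : ℤ) *
      ((∏ k ∈ Finset.range n, c k) +
        x (-1) * y 0 * ∑ l ∈ Finset.range n, d l * ∏ k ∈ Finset.Ico (l + 1) n, c k)
      = x (-1) * y 0 := by
    intro n
    induction n with
    | zero => norm_num
    | succ n ih =>
      have hrec := hvrec n
      have hB : (∑ l ∈ Finset.range (n + 1), d l * ∏ k ∈ Finset.Ico (l + 1) (n + 1), c k)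
          = (∑ l ∈ Finset.range n, d l * ∏ k ∈ Finset.Ico (l + 1) n, c k) * c n + d n := by
        rw [Finset.sum_range_succ, Finset.Ico_self, Finset.prod_empty, mul_one, Finset.sum_mul]
        congr 1
        refine Finset.sum_congr rfl fun l hl => ?_
        rw [Finset.prod_Ico_succ_top (Finset.mem_range.mp hl)]
        ring
      rw [show (((n : ℕ) + 1 : ℕ) : ℤ) - 1 = (n : ℤ) from by push_cast; ring,
        show (((n : ℕ) + 1 : ℕ) : ℤ) = (n : ℤ) + 1 from by push_cast; ring,
        Finset.prod_range_succ, hB]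
      refine mul_left_cancel₀ (hvN n) ?_
      linear_combination (c n * (x (n : ℤ) * y ((n : ℤ) + 1))) * ih + (x (-1) * y 0) * hrec
  -- main induction
  intro n
  induction n with
  | zero => norm_num
  | succ n ih =>
    have hP := keyu (2 * n + 2)
    rw [show ((2 * n + 2 : ℕ) : ℤ) - 1 = 2 * (n : ℤ) + 1 from by push_cast; ring,
      show ((2 * n + 2 : ℕ) : ℤ) = 2 * (n : ℤ) + 2 from by push_cast; ring] at hP
    have hQ := keyv (2 * n + 1)
    rw [show ((2 * n + 1 : ℕ) : ℤ) - 1 = 2 * (n : ℤ) from by push_cast; ring,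
      show ((2 * n + 1 : ℕ) : ℤ) = 2 * (n : ℤ) + 1 from by push_cast; ring] at hQ
    have hu2ne : x (2 * (n : ℤ) + 2) * y (2 * (n : ℤ) + 1) ≠ 0 :=
      mul_ne_zero (hx _ (by omega)) (hy _ (by omega))
    have hv2ne : x (2 * (n : ℤ)) * y (2 * (n : ℤ) + 1) ≠ 0 :=
      mul_ne_zero (hx _ (by omega)) (hy _ (by omega))
    have hPne : ((∏ k ∈ Finset.range (2 * n + 2), a k) +
        x 0 * y (-1) * ∑ l ∈ Finset.range (2 * n + 2), b l *
          ∏ k ∈ Finset.Ico (l + 1) (2 * n + 2), a k) ≠ 0 := by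
      intro h
      rw [h, mul_zero] at hP
      exact hu0ne hP.symm
    have hQne : ((∏ k ∈ Finset.range (2 * n + 1), c k) +
        x (-1) * y 0 * ∑ l ∈ Finset.range (2 * n + 1), d l *
          ∏ k ∈ Finset.Ico (l + 1) (2 * n + 1), c k) ≠ 0 := by
      intro h
      rw [h, mul_zero] at hQ
      exact hv0ne hQ.symm
    have hu2 : x (2 * (n : ℤ) + 2) * y (2 * (n : ℤ) + 1) = (x 0 * y (-1)) /
        ((∏ k ∈ Finset.range (2 * n + 2), a k) +
          x 0 * y (-1) * ∑ l ∈ Finset.range (2 * n + 2), b l *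
            ∏ k ∈ Finset.Ico (l + 1) (2 * n + 2), a k) := by
      rw [eq_div_iff hPne]; exact hP
    have hv2 : x (2 * (n : ℤ)) * y (2 * (n : ℤ) + 1) = (x (-1) * y 0) /
        ((∏ k ∈ Finset.range (2 * n + 1), c k) +
          x (-1) * y 0 * ∑ l ∈ Finset.range (2 * n + 1), d l *
            ∏ k ∈ Finset.Ico (l + 1) (2 * n + 1), c k) := by
      rw [eq_div_iff hQne]; exact hQ
    have hx2n : x (2 * (n : ℤ)) ≠ 0 := hx _ (by omega)
    have hy21 : y (2 * (n : ℤ) + 1) ≠ 0 := hy _ (by omega)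
    have hrw : x (2 * ((n : ℕ) + 1 : ℕ) : ℤ) = x (2 * (n : ℤ)) *
        (x (2 * (n : ℤ) + 2) * y (2 * (n : ℤ) + 1)) /
        (x (2 * (n : ℤ)) * y (2 * (n : ℤ) + 1)) := by
      rw [show (2 * (((n : ℕ) + 1 : ℕ) : ℤ)) = 2 * (n : ℤ) + 2 from by push_cast; ring]
      field_simp
    rw [hrw, Finset.prod_range_succ, hu2, hv2, ih]
    exact stmt_6_aux (x 0) (y (-1)) (x (-1)) (y 0) _ _ _ n hxm1 hy0 hPne hQne
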